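/- Let U be an r×d random matrix with i.i.d. Rademacher entries (taking values +1 and −1 each with probability 1/2), and let w ∈ ℝ^r be a random vector with i.i.d. Gaussian N(0, σ_c²) coordinates, independent of U, with σ_c > 0. Let h ∈ ℝ^d be fixed and let n ≥ 1 and c > 0, and set ĝ = (1/r)·UᵀU h + (1/(n·c·√r))·Uᵀ w. Then E[‖ĝ‖₂²] = (1 + (d−1)/r)·‖h‖₂² + d·σ_c²/(n c)². In particular, if ‖h‖₂ ≤ L then E[‖ĝ‖₂²] ≤ L²·(1 + (d−1)/r) + d·σ_c²/(n c)². -/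

import Mathlib

open MeasureTheory ProbabilityTheory Matrix

/-- The Rademacher distribution: `+1` and `-1` each with probability `1/2`. -/
noncomputable def radMeasure : Measure ℝ :=
  (1 / 2 : ENNReal) • Measure.dirac 1 + (1 / 2 : ENNReal) • Measure.dirac (-1)

section auxlemmas
open Real NNReal ENNReal


lemma gaussianPDFReal_eq (v : ℝ≥0) (x : ℝ) :
    gaussianPDFReal 0 v x = (√(2 * π * v))⁻¹ * Real.exp (-(1/(2*(v:ℝ))) * x ^ 2) := by
  rw [gaussianPDFReal_def]
  ring_nf

lemma integrable_pow_mul_gaussianPDFReal (v : ℝ≥0) (hv : 0 < (v:ℝ)) (k : ℕ) :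
    Integrable (fun x : ℝ => x ^ k * gaussianPDFReal 0 v x) := by
  have hb : 0 < 1/(2*(v:ℝ)) := by positivity
  have h := (integrable_rpow_mul_exp_neg_mul_sq hb (s := k) (by
    have : (0:ℝ) ≤ k := Nat.cast_nonneg k
    linarith)).const_mul ((√(2 * π * v))⁻¹)
  refine h.congr ?_
  filter_upwards with x
  rw [gaussianPDFReal_eq, Real.rpow_natCast]
  ring

lemma integral_pow_one_gaussianPDFReal (v : ℝ≥0) :
    ∫ x : ℝ, x * gaussianPDFReal 0 v x = 0 := by
  have h := integral_neg_eq_self (fun x : ℝ => x * gaussianPDFReal 0 v x) volume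
  have heq : ∀ x : ℝ, (-x) * gaussianPDFReal 0 v (-x) = -(x * gaussianPDFReal 0 v x) := by
    intro x
    rw [gaussianPDFReal_eq, gaussianPDFReal_eq]
    ring_nf
  simp only [heq] at h
  rw [integral_neg] at h
  linarith

lemma integral_pow_two_gaussianPDFReal (v : ℝ≥0) (hv : 0 < (v:ℝ)) :
    ∫ x : ℝ, x ^ 2 * gaussianPDFReal 0 v x = v := by
  have hb : 0 < 1/(2*(v:ℝ)) := by positivity
  have h2v : 0 < 2*(v:ℝ) := by positivity
  have hint : Integrable (fun x : ℝ => x ^ 2 * gaussianPDFReal 0 v x) :=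
    integrable_pow_mul_gaussianPDFReal v hv 2
  set f : ℝ → ℝ := fun x => x ^ 2 * gaussianPDFReal 0 v x with hf
  have heven : ∀ x, f (-x) = f x := by
    intro x; simp only [hf, gaussianPDFReal_eq]; ring_nf
  have hsplit : ∫ x, f x = (∫ x in Set.Iic 0, f x) + ∫ x in Set.Ioi 0, f x :=
    (intervalIntegral.integral_Iic_add_Ioi hint.integrableOn hint.integrableOn).symm
  have hIic : (∫ x in Set.Iic 0, f x) = ∫ x in Set.Ioi 0, f x := by
    have := integral_comp_neg_Ioi (0:ℝ) f
    simp only [heven, neg_zero] at this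
    exact this.symm
  have h2 := integral_rpow_mul_exp_neg_mul_rpow (p := 2) (q := 2) (b := 1/(2*(v:ℝ)))
    (by norm_num) (by norm_num) hb
  have hIoi : (∫ x in Set.Ioi 0, f x)
      = (√(2 * π * v))⁻¹ * ((1/(2*(v:ℝ))) ^ (-((2:ℝ)+1)/2) * (1/2) * Real.Gamma (((2:ℝ)+1)/2)) := by
    rw [← h2, ← integral_const_mul]
    refine setIntegral_congr_fun measurableSet_Ioi (fun x hx => ?_)
    rw [hf]
    simp only
    rw [gaussianPDFReal_eq]
    rw [show ((2:ℝ)) = ((2:ℕ):ℝ) by norm_num]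
    rw [Real.rpow_natCast x 2]
    push_cast
    ring
  have hGamma : Real.Gamma ((3:ℝ)/2) = √π / 2 := by
    rw [show ((3:ℝ)/2) = 1/2 + 1 by norm_num, Real.Gamma_add_one (by norm_num),
      Real.Gamma_one_half_eq]
    ring
  have hrpow : ((1/(2*(v:ℝ)))) ^ (-(3:ℝ)/2) = (2*(v:ℝ)) * √(2*(v:ℝ)) := by
    rw [one_div, ← Real.rpow_neg_one (2*(v:ℝ)), ← Real.rpow_mul (le_of_lt h2v)]
    rw [show ((-1:ℝ) * (-(3:ℝ)/2)) = 1 + 1/2 by norm_num, Real.rpow_add h2v,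
      Real.rpow_one, ← Real.sqrt_eq_rpow]
  have hsqrt : √(2 * π * v) = √(2*(v:ℝ)) * √π := by
    rw [show (2 * π * (v:ℝ)) = (2*(v:ℝ)) * π by ring, Real.sqrt_mul (le_of_lt h2v)]
  rw [hsplit, hIic, hIoi, show (-((2:ℝ)+1)/2) = (-(3:ℝ)/2) by norm_num,
    show (((2:ℝ)+1)/2) = ((3:ℝ)/2) by norm_num, hGamma, hrpow, hsqrt]
  have hs : 0 < √(2*(v:ℝ)) := Real.sqrt_pos.mpr h2v
  have hp : 0 < √π := Real.sqrt_pos.mpr Real.pi_pos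
  have hs2 : √(2*(v:ℝ)) ^ 2 = 2*(v:ℝ) := Real.sq_sqrt (le_of_lt h2v)
  field_simp
  nlinarith [hs2, hs, hp]



lemma gaussianPDF_eq_coe (v : ℝ≥0) : gaussianPDF 0 v
    = fun x => ((gaussianPDFReal 0 v x).toNNReal : ℝ≥0∞) := by
  rw [gaussianPDF_def]
  rfl

lemma integrable_pow_gaussianReal (v : ℝ≥0) (hv : 0 < (v:ℝ)) (k : ℕ) :
    Integrable (fun x : ℝ => x ^ k) (gaussianReal 0 v) := by
  have hvne : v ≠ 0 := by exact_mod_cast hv.ne'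
  rw [gaussianReal_of_var_ne_zero 0 hvne]
  rw [integrable_withDensity_iff (measurable_gaussianPDF 0 v)
    (ae_of_all _ fun x => by rw [gaussianPDF_def]; exact ENNReal.ofReal_lt_top)]
  refine (integrable_pow_mul_gaussianPDFReal v hv k).congr ?_
  filter_upwards with x
  rw [gaussianPDF_eq_coe]
  simp [Real.coe_toNNReal _ (gaussianPDFReal_nonneg 0 v x)]

lemma integral_pow_gaussianReal (v : ℝ≥0) (hv : 0 < (v:ℝ)) (k : ℕ) :
    ∫ x, x ^ k ∂(gaussianReal 0 v) = ∫ x : ℝ, x ^ k * gaussianPDFReal 0 v x := by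
  have hvne : v ≠ 0 := by exact_mod_cast hv.ne'
  rw [gaussianReal_of_var_ne_zero 0 hvne, gaussianPDF_eq_coe,
    integral_withDensity_eq_integral_smul (measurable_gaussianPDFReal 0 v).real_toNNReal]
  congr 1
  funext x
  simp [NNReal.smul_def, Real.coe_toNNReal _ (gaussianPDFReal_nonneg 0 v x)]
  ring

lemma integral_one_gaussianReal (v : ℝ≥0) (hv : 0 < (v:ℝ)) :
    ∫ x, x ∂(gaussianReal 0 v) = 0 := by
  have := integral_pow_gaussianReal v hv 1
  simpa [integral_pow_one_gaussianPDFReal v] using this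

lemma integral_two_gaussianReal (v : ℝ≥0) (hv : 0 < (v:ℝ)) :
    ∫ x, x ^ 2 ∂(gaussianReal 0 v) = v := by
  rw [integral_pow_gaussianReal v hv 2, integral_pow_two_gaussianPDFReal v hv]



lemma integrable_radMeasure (f : ℝ → ℝ) : Integrable f radMeasure := by
  have h1 : Integrable f (Measure.dirac (1:ℝ)) :=
    (integrable_const (f 1)).congr (ae_eq_dirac f).symm
  have h2 : Integrable f (Measure.dirac (-1:ℝ)) :=
    (integrable_const (f (-1))).congr (ae_eq_dirac f).symm
  rw [radMeasure]
  exact integrable_add_measure.mpr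
    ⟨h1.smul_measure (by norm_num), h2.smul_measure (by norm_num)⟩

lemma integral_radMeasure (f : ℝ → ℝ) :
    ∫ x, f x ∂radMeasure = (f 1 + f (-1)) / 2 := by
  rw [radMeasure, integral_add_measure
    (((integrable_const (f 1)).congr (ae_eq_dirac f).symm).smul_measure (by norm_num : (1/2:ENNReal) ≠ ⊤))
    (((integrable_const (f (-1))).congr (ae_eq_dirac f).symm).smul_measure (by norm_num : (1/2:ENNReal) ≠ ⊤)),
    integral_smul_measure, integral_smul_measure, integral_dirac, integral_dirac]
  norm_num
  ring

lemma radMeasure_sq_eq_one : radMeasure {x : ℝ | x ^ 2 ≠ 1} = 0 := by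
  have h1 : (1:ℝ) ∉ {x : ℝ | x ^ 2 ≠ 1} := by norm_num
  have h2 : (-1:ℝ) ∉ {x : ℝ | x ^ 2 ≠ 1} := by norm_num
  have hs : MeasurableSet {x : ℝ | x ^ 2 ≠ 1} :=
    ((measurable_id.pow_const 2) (measurableSet_singleton 1)).compl
  rw [radMeasure]
  simp [Measure.dirac_apply' _ hs, Set.indicator_of_notMem h1, Set.indicator_of_notMem h2]

end auxlemmas

section aux
variable {Ω ι : Type*} [MeasurableSpace Ω] {P : Measure Ω} {Z : ι → Ω → ℝ}

lemma indepFun_triple_single (hIndep : iIndepFun Z P)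
    (hMeas : ∀ i, Measurable (Z i)) (a b c e : ι) (ha : a ≠ e) (hb : b ≠ e) (hc : c ≠ e) :
    IndepFun (fun ω => Z a ω * Z b ω * Z c ω) (Z e) P := by
  classical
  have hd : Disjoint ({a, b, c} : Finset ι) ({e} : Finset ι) := by
    simp only [Finset.disjoint_left, Finset.mem_insert, Finset.mem_singleton]
    rintro x (rfl | rfl | rfl) hx <;> simp_all
  have h := hIndep.indepFun_finset {a,b,c} {e} hd hMeas
  have h2 := h.comp (φ := fun v : ({a,b,c} : Finset ι) → ℝ =>
      v ⟨a, by simp⟩ * v ⟨b, by simp⟩ * v ⟨c, by simp⟩)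
    (ψ := fun v : ({e} : Finset ι) → ℝ => v ⟨e, by simp⟩)
    (by measurability)
    (measurable_pi_apply _ : Measurable (fun v : ({e} : Finset ι) → ℝ => v ⟨e, by simp⟩))
  exact h2
end aux


section algebra
open Finset

lemma monomial_expand {d : ℕ} (rinv κ : ℝ) (h : Fin d → ℝ)
    (Aij Ai'j : ℝ) (Ai Ai' : Fin d → ℝ) (Wi Wi' : ℝ) :
    (Aij * (rinv * (∑ j', Ai j' * h j') + κ * Wi))
      * (Ai'j * (rinv * (∑ j', Ai' j' * h j') + κ * Wi'))
      = rinv^2 * (∑ j₁, ∑ j₂, h j₁ * h j₂ * ((Aij * Ai j₁) * (Ai'j * Ai' j₂)))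
      + (rinv * κ) * (∑ j₁, h j₁ * ((Aij * Ai j₁) * (Ai'j * Wi')))
      + (rinv * κ) * (∑ j₂, h j₂ * ((Ai'j * Ai' j₂) * (Aij * Wi)))
      + κ^2 * ((Aij * Ai'j) * (Wi * Wi')) := by
  have e1 : (Aij * (∑ j', Ai j' * h j')) * (Ai'j * (∑ j', Ai' j' * h j'))
      = ∑ j₁, ∑ j₂, h j₁ * h j₂ * ((Aij * Ai j₁) * (Ai'j * Ai' j₂)) := by
    rw [Finset.mul_sum, Finset.mul_sum, Finset.sum_mul_sum]
    exact Finset.sum_congr rfl fun j₁ _ => Finset.sum_congr rfl fun j₂ _ => by ring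
  have e2 : (Aij * (∑ j', Ai j' * h j')) * (Ai'j * Wi')
      = ∑ j₁, h j₁ * ((Aij * Ai j₁) * (Ai'j * Wi')) := by
    rw [Finset.mul_sum, Finset.sum_mul]
    exact Finset.sum_congr rfl fun j₁ _ => by ring
  have e3 : (Aij * Wi) * (Ai'j * (∑ j', Ai' j' * h j'))
      = ∑ j₂, h j₂ * ((Ai'j * Ai' j₂) * (Aij * Wi)) := by
    rw [Finset.mul_sum, Finset.mul_sum]
    exact Finset.sum_congr rfl fun j₂ _ => by ring
  calc (Aij * (rinv * (∑ j', Ai j' * h j') + κ * Wi))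
      * (Ai'j * (rinv * (∑ j', Ai' j' * h j') + κ * Wi'))
      = rinv^2 * ((Aij * (∑ j', Ai j' * h j')) * (Ai'j * (∑ j', Ai' j' * h j')))
        + (rinv * κ) * ((Aij * (∑ j', Ai j' * h j')) * (Ai'j * Wi'))
        + (rinv * κ) * ((Aij * Wi) * (Ai'j * (∑ j', Ai' j' * h j')))
        + κ^2 * ((Aij * Ai'j) * (Wi * Wi')) := by ring
    _ = _ := by rw [e1, e2, e3]

lemma vec_expand {r d : ℕ} (rinv κ : ℝ) (M : Matrix (Fin r) (Fin d) ℝ)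
    (wv : Fin r → ℝ) (h : Fin d → ℝ) (j : Fin d) :
    rinv * (Mᵀ *ᵥ (M *ᵥ h)) j + κ * (Mᵀ *ᵥ wv) j
      = ∑ i, M i j * (rinv * (∑ j', M i j' * h j') + κ * wv i) := by
  have h1 : (Mᵀ *ᵥ (M *ᵥ h)) j = ∑ i, M i j * (∑ j', M i j' * h j') := by
    simp [Matrix.mulVec, dotProduct, Matrix.transpose_apply]
  have h2 : (Mᵀ *ᵥ wv) j = ∑ i, M i j * wv i := by
    simp [Matrix.mulVec, dotProduct, Matrix.transpose_apply]
  rw [h1, h2, Finset.mul_sum, Finset.mul_sum, ← Finset.sum_add_distrib]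
  exact Finset.sum_congr rfl fun i _ => by ring

end algebra

/-- Second moment of the parameter server's gradient estimate (key step of Theorem 3): with
`U` an `r × d` i.i.d. Rademacher matrix independent of the Gaussian noise vector `w` with
i.i.d. `N(0, σ_c²)` coordinates, and `ĝ = (1/r) Uᵀ U h + (1/(n c √r)) Uᵀ w`,
`E[‖ĝ‖₂²] = (1 + (d-1)/r) ‖h‖₂² + d σ_c²/(n c)²`; in particular, if `‖h‖₂ ≤ L` then
`E[‖ĝ‖₂²] ≤ L² (1 + (d-1)/r) + d σ_c²/(n c)²`. -/
theorem stmt19 {Ωs : Type*} [MeasurableSpace Ωs] (P : Measure Ωs) [IsProbabilityMeasure P]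
    (r d : ℕ) (hr : 1 ≤ r) (hd : 1 ≤ d)
    (σc : ℝ) (hσc : 0 < σc)
    (U : Ωs → Matrix (Fin r) (Fin d) ℝ) (w : Ωs → Fin r → ℝ)
    (hMeasU : ∀ i j, Measurable (fun ω => U ω i j))
    (hMeasw : ∀ q, Measurable (fun ω => w ω q))
    (hIndep : iIndepFun
      (Sum.elim (fun p : Fin r × Fin d => fun ω => U ω p.1 p.2)
        (fun q : Fin r => fun ω => w ω q)) P)
    (hLawU : ∀ i j, Measure.map (fun ω => U ω i j) P = radMeasure)
    (hLaww : ∀ q, Measure.map (fun ω => w ω q) P = gaussianReal 0 (Real.toNNReal (σc ^ 2)))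
    (h : Fin d → ℝ) (n : ℕ) (hn : 1 ≤ n) (c : ℝ) (hc : 0 < c) (L : ℝ) :
    (∫ ω, ∑ j, ((1 / (r : ℝ)) * ((U ω)ᵀ *ᵥ (U ω *ᵥ h)) j
          + (1 / ((n : ℝ) * c * Real.sqrt r)) * ((U ω)ᵀ *ᵥ w ω) j) ^ 2 ∂P
        = (1 + ((d : ℝ) - 1) / (r : ℝ)) * ∑ j, h j ^ 2
          + (d : ℝ) * σc ^ 2 / ((n : ℝ) * c) ^ 2)
      ∧ (Real.sqrt (∑ j, h j ^ 2) ≤ L →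
        ∫ ω, ∑ j, ((1 / (r : ℝ)) * ((U ω)ᵀ *ᵥ (U ω *ᵥ h)) j
            + (1 / ((n : ℝ) * c * Real.sqrt r)) * ((U ω)ᵀ *ᵥ w ω) j) ^ 2 ∂P
          ≤ L ^ 2 * (1 + ((d : ℝ) - 1) / (r : ℝ))
            + (d : ℝ) * σc ^ 2 / ((n : ℝ) * c) ^ 2) := by
  classical
  set κ : ℝ := 1 / ((n : ℝ) * c * Real.sqrt r) with hκ
  set v : NNReal := Real.toNNReal (σc ^ 2) with hv
  have hvcoe : (v : ℝ) = σc ^ 2 := Real.coe_toNNReal _ (sq_nonneg σc)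
  have hvpos : 0 < (v : ℝ) := by rw [hvcoe]; positivity
  set Z := Sum.elim (fun p : Fin r × Fin d => fun ω => U ω p.1 p.2)
      (fun q : Fin r => fun ω => w ω q) with hZ
  have hZm : ∀ s, Measurable (Z s) := by
    rintro (⟨i, j⟩ | q)
    · exact hMeasU i j
    · exact hMeasw q
  ---- basic a.e. facts about U entries
  have aeA2 : ∀ i j, ∀ᵐ ω ∂P, (U ω i j) ^ 2 = 1 := by
    intro i j
    rw [ae_iff]
    have hs : MeasurableSet {x : ℝ | x ^ 2 ≠ 1} :=
      ((measurable_id.pow_const 2) (measurableSet_singleton 1)).compl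
    have : {ω | ¬ (U ω i j) ^ 2 = 1} = (fun ω => U ω i j) ⁻¹' {x : ℝ | x ^ 2 ≠ 1} := rfl
    rw [this, ← Measure.map_apply (hMeasU i j) hs, hLawU, radMeasure_sq_eq_one]
  have aeA1 : ∀ i j, ∀ᵐ ω ∂P, |U ω i j| = 1 := by
    intro i j
    filter_upwards [aeA2 i j] with ω hω
    rw [← Real.sqrt_sq_eq_abs, hω, Real.sqrt_one]
  ---- integrability of W powers
  have I_Wpow : ∀ (q : Fin r) (k : ℕ), Integrable (fun ω => (w ω q) ^ k) P := by
    intro q k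
    have hint : Integrable (fun x : ℝ => x ^ k) (Measure.map (fun ω => w ω q) P) := by
      rw [hLaww q]; exact integrable_pow_gaussianReal v hvpos k
    exact (integrable_map_measure hint.aestronglyMeasurable (hMeasw q).aemeasurable).mp hint
  have I_W : ∀ q, Integrable (fun ω => w ω q) P := by
    intro q
    have := I_Wpow q 1
    simpa using this
  have E_W : ∀ q, ∫ ω, w ω q ∂P = 0 := by
    intro q
    have hint : AEStronglyMeasurable (fun x : ℝ => x) (Measure.map (fun ω => w ω q) P) :=
      aestronglyMeasurable_id
    rw [← integral_map (hMeasw q).aemeasurable hint, hLaww q]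
    exact integral_one_gaussianReal v hvpos
  have E_W2 : ∀ q, ∫ ω, (w ω q) ^ 2 ∂P = σc ^ 2 := by
    intro q
    have hint : AEStronglyMeasurable (fun x : ℝ => x ^ 2) (Measure.map (fun ω => w ω q) P) :=
      (measurable_id.pow_const 2).aestronglyMeasurable
    rw [← integral_map (hMeasw q).aemeasurable hint, hLaww q, ← hvcoe]
    exact integral_two_gaussianReal v hvpos
  ---- integrability of bounded functions
  have bddInt : ∀ (F : Ωs → ℝ), Measurable F → (∀ᵐ ω ∂P, ‖F ω‖ ≤ 1) → Integrable F P :=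
    fun F hm hb => Integrable.mono' (integrable_const 1) hm.aestronglyMeasurable hb
  have I_A : ∀ i j, Integrable (fun ω => U ω i j) P := by
    intro i j
    refine bddInt _ (hMeasU i j) ?_
    filter_upwards [aeA1 i j] with ω h1
    rw [Real.norm_eq_abs, h1]
  have I_AA : ∀ i i' j j', Integrable (fun ω => U ω i j * U ω i' j') P := by
    intro i i' j j'
    refine bddInt _ ((hMeasU i j).mul (hMeasU i' j')) ?_
    filter_upwards [aeA1 i j, aeA1 i' j'] with ω h1 h2
    rw [Real.norm_eq_abs, abs_mul, h1, h2]; norm_num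
  have I_AAA : ∀ i i' j j₁ j₂, Integrable (fun ω => U ω i j * U ω i j₁ * U ω i' j₂) P := by
    intro i i' j j₁ j₂
    refine bddInt _ (((hMeasU i j).mul (hMeasU i j₁)).mul (hMeasU i' j₂)) ?_
    filter_upwards [aeA1 i j, aeA1 i j₁, aeA1 i' j₂] with ω h1 h2 h3
    rw [Real.norm_eq_abs, abs_mul, abs_mul, h1, h2, h3]; norm_num
  have I_AAAA : ∀ i i' j j₁ j₂,
      Integrable (fun ω => (U ω i j * U ω i j₁) * (U ω i' j * U ω i' j₂)) P := by
    intro i i' j j₁ j₂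
    refine bddInt _ (((hMeasU i j).mul (hMeasU i j₁)).mul ((hMeasU i' j).mul (hMeasU i' j₂))) ?_
    filter_upwards [aeA1 i j, aeA1 i j₁, aeA1 i' j, aeA1 i' j₂] with ω h1 h2 h3 h4
    rw [Real.norm_eq_abs, abs_mul, abs_mul, abs_mul, h1, h2, h3, h4]; norm_num
  have I_AW : ∀ i j q, Integrable (fun ω => U ω i j * w ω q) P := by
    intro i j q
    refine Integrable.bdd_mul (c := 1) (I_W q) (hMeasU i j).aestronglyMeasurable ?_
    filter_upwards [aeA1 i j] with ω h1
    rw [Real.norm_eq_abs, h1]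
  have I_AAAW : ∀ i i' j j₁ q,
      Integrable (fun ω => (U ω i j * U ω i j₁) * (U ω i' j * w ω q)) P := by
    intro i i' j j₁ q
    have heq : (fun ω => (U ω i j * U ω i j₁) * (U ω i' j * w ω q))
        = fun ω => (U ω i j * U ω i j₁ * U ω i' j) * w ω q := by funext ω; ring
    rw [heq]
    refine Integrable.bdd_mul (c := 1) (I_W q)
      (((hMeasU i j).mul (hMeasU i j₁)).mul (hMeasU i' j)).aestronglyMeasurable ?_
    filter_upwards [aeA1 i j, aeA1 i j₁, aeA1 i' j] with ω h1 h2 h3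
    rw [Real.norm_eq_abs, abs_mul, abs_mul, h1, h2, h3]; norm_num
  have I_WW : ∀ q q', Integrable (fun ω => w ω q * w ω q') P := by
    intro q q'
    by_cases hqq : q = q'
    · subst hqq
      have := I_Wpow q 2
      refine this.congr ?_
      filter_upwards with ω; ring
    · have indep : IndepFun (fun ω => w ω q) (fun ω => w ω q') P :=
        hIndep.indepFun (show (Sum.inr q : (Fin r × Fin d) ⊕ Fin r) ≠ Sum.inr q' by simp [hqq])
      exact indep.integrable_mul (I_W q) (I_W q')
  have I_AAWW : ∀ i i' j q q',
      Integrable (fun ω => (U ω i j * U ω i' j) * (w ω q * w ω q')) P := by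
    intro i i' j q q'
    refine Integrable.bdd_mul (c := 1) (I_WW q q')
      ((hMeasU i j).mul (hMeasU i' j)).aestronglyMeasurable ?_
    filter_upwards [aeA1 i j, aeA1 i' j] with ω h1 h2
    rw [Real.norm_eq_abs, abs_mul, h1, h2]; norm_num
  ---- expectations of monomials
  have E_A : ∀ i j, ∫ ω, U ω i j ∂P = 0 := by
    intro i j
    have hint : AEStronglyMeasurable (fun x : ℝ => x) (Measure.map (fun ω => U ω i j) P) :=
      aestronglyMeasurable_id
    rw [← integral_map (hMeasU i j).aemeasurable hint, hLawU i j, integral_radMeasure]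
    norm_num
  have E_AA : ∀ i j j', ∫ ω, U ω i j * U ω i j' ∂P = if j = j' then 1 else 0 := by
    intro i j j'
    by_cases hjj : j = j'
    · subst hjj
      simp only [if_pos rfl]
      have : (fun ω => U ω i j * U ω i j) =ᵐ[P] fun _ => (1:ℝ) := by
        filter_upwards [aeA2 i j] with ω h1
        rw [← h1]; ring
      rw [integral_congr_ae this]
      simp
    · simp only [if_neg hjj]
      have indep : IndepFun (fun ω => U ω i j) (fun ω => U ω i j') P :=
        hIndep.indepFun (show (Sum.inl (i,j) : (Fin r × Fin d) ⊕ Fin r) ≠ Sum.inl (i,j') by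
          simp [hjj])
      have := indep.integral_mul_eq_mul_integral (I_A i j).aestronglyMeasurable (I_A i j').aestronglyMeasurable
      rw [show (fun ω => U ω i j) * (fun ω => U ω i j') = fun ω => U ω i j * U ω i j' from rfl]
        at this
      rw [this, E_A, E_A, mul_zero]
  have E_AW : ∀ i j q, ∫ ω, U ω i j * w ω q ∂P = 0 := by
    intro i j q
    have indep : IndepFun (fun ω => U ω i j) (fun ω => w ω q) P :=
      hIndep.indepFun (show (Sum.inl (i,j) : (Fin r × Fin d) ⊕ Fin r) ≠ Sum.inr q by simp)
    have := indep.integral_mul_eq_mul_integral (I_A i j).aestronglyMeasurable (I_W q).aestronglyMeasurable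
    rw [show (fun ω => U ω i j) * (fun ω => w ω q) = fun ω => U ω i j * w ω q from rfl] at this
    rw [this, E_A, zero_mul]
  have E4 : ∀ (i i' : Fin r) (j j₁ j₂ : Fin d), i ≠ i' →
      ∫ ω, (U ω i j * U ω i j₁) * (U ω i' j * U ω i' j₂) ∂P
        = (if j = j₁ then (1:ℝ) else 0) * (if j = j₂ then (1:ℝ) else 0) := by
    intro i i' j j₁ j₂ hii
    have indep := hIndep.indepFun_mul_mul hZm (Sum.inl (i,j)) (Sum.inl (i,j₁))
      (Sum.inl (i',j)) (Sum.inl (i',j₂))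
      (by simp [hii]) (by simp [hii]) (by simp [hii]) (by simp [hii])
    have := indep.integral_mul_eq_mul_integral (I_AA i i j j₁).aestronglyMeasurable (I_AA i' i' j j₂).aestronglyMeasurable
    rw [show (Z (Sum.inl (i,j)) * Z (Sum.inl (i,j₁))) * (Z (Sum.inl (i',j)) * Z (Sum.inl (i',j₂)))
        = fun ω => (U ω i j * U ω i j₁) * (U ω i' j * U ω i' j₂) from rfl] at this
    rw [this]
    rw [show Z (Sum.inl (i,j)) * Z (Sum.inl (i,j₁)) = fun ω => U ω i j * U ω i j₁ from rfl,
      show Z (Sum.inl (i',j)) * Z (Sum.inl (i',j₂)) = fun ω => U ω i' j * U ω i' j₂ from rfl,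
      E_AA, E_AA]
  have E4diag : ∀ (i : Fin r) (j j₁ j₂ : Fin d),
      ∫ ω, (U ω i j * U ω i j₁) * (U ω i j * U ω i j₂) ∂P
        = (if j₁ = j₂ then (1:ℝ) else 0) := by
    intro i j j₁ j₂
    have hcongr : (fun ω => (U ω i j * U ω i j₁) * (U ω i j * U ω i j₂))
        =ᵐ[P] fun ω => U ω i j₁ * U ω i j₂ := by
      filter_upwards [aeA2 i j] with ω h1
      have : (U ω i j * U ω i j₁) * (U ω i j * U ω i j₂)
          = (U ω i j) ^ 2 * (U ω i j₁ * U ω i j₂) := by ring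
      rw [this, h1, one_mul]
    rw [integral_congr_ae hcongr, E_AA]
  have E_3AW : ∀ (i i' : Fin r) (j j₁ : Fin d) (q : Fin r),
      ∫ ω, (U ω i j * U ω i j₁) * (U ω i' j * w ω q) ∂P = 0 := by
    intro i i' j j₁ q
    have heq : (fun ω => (U ω i j * U ω i j₁) * (U ω i' j * w ω q))
        = fun ω => (U ω i j * U ω i j₁ * U ω i' j) * w ω q := by funext ω; ring
    rw [heq]
    have indep := indepFun_triple_single hIndep hZm (Sum.inl (i,j)) (Sum.inl (i,j₁))
      (Sum.inl (i',j)) (Sum.inr q) (by simp) (by simp) (by simp)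
    have hint3 : Integrable (fun ω => Z (Sum.inl (i,j)) ω * Z (Sum.inl (i,j₁)) ω
        * Z (Sum.inl (i',j)) ω) P := I_AAA i i' j j₁ j
    have := indep.integral_mul_eq_mul_integral hint3.aestronglyMeasurable (I_W q).aestronglyMeasurable
    rw [show ((fun ω => Z (Sum.inl (i,j)) ω * Z (Sum.inl (i,j₁)) ω * Z (Sum.inl (i',j)) ω)
        * Z (Sum.inr q)) = fun ω => (U ω i j * U ω i j₁ * U ω i' j) * w ω q from rfl] at this
    rw [this, show Z (Sum.inr q) = fun ω => w ω q from rfl, E_W, mul_zero]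
  have E_T4 : ∀ (i i' : Fin r) (j : Fin d),
      ∫ ω, (U ω i j * U ω i' j) * (w ω i * w ω i') ∂P
        = if i = i' then σc ^ 2 else 0 := by
    intro i i' j
    by_cases hii : i = i'
    · subst hii
      simp only [if_pos rfl]
      have hcongr : (fun ω => (U ω i j * U ω i j) * (w ω i * w ω i))
          =ᵐ[P] fun ω => (w ω i) ^ 2 := by
        filter_upwards [aeA2 i j] with ω h1
        have : (U ω i j * U ω i j) * (w ω i * w ω i) = (U ω i j) ^ 2 * (w ω i) ^ 2 := by ring
        rw [this, h1, one_mul]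
      rw [integral_congr_ae hcongr, E_W2]
      simp
    · simp only [if_neg hii]
      have heq : (fun ω => (U ω i j * U ω i' j) * (w ω i * w ω i'))
          = fun ω => (U ω i j * w ω i) * (U ω i' j * w ω i') := by funext ω; ring
      rw [heq]
      have indep := hIndep.indepFun_mul_mul hZm (Sum.inl (i,j)) (Sum.inr i)
        (Sum.inl (i',j)) (Sum.inr i')
        (by simp [hii]) (by simp) (by simp) (by simp [hii])
      have := indep.integral_mul_eq_mul_integral (I_AW i j i).aestronglyMeasurable (I_AW i' j i').aestronglyMeasurable
      rw [show (Z (Sum.inl (i,j)) * Z (Sum.inr i)) * (Z (Sum.inl (i',j)) * Z (Sum.inr i'))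
          = fun ω => (U ω i j * w ω i) * (U ω i' j * w ω i') from rfl] at this
      rw [this]
      rw [show Z (Sum.inl (i,j)) * Z (Sum.inr i) = fun ω => U ω i j * w ω i from rfl,
        show Z (Sum.inl (i',j)) * Z (Sum.inr i') = fun ω => U ω i' j * w ω i' from rfl,
        E_AW, zero_mul]
  ---- grouped integrals
  set Y : Fin r → Ωs → ℝ := fun i ω => (1/(r:ℝ)) * (∑ j', U ω i j' * h j') + κ * w ω i with hY
  have E_T1 : ∀ (i i' : Fin r) (j : Fin d),
      ∫ ω, ∑ j₁, ∑ j₂, h j₁ * h j₂ * ((U ω i j * U ω i j₁) * (U ω i' j * U ω i' j₂)) ∂P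
        = if i = i' then (∑ j', h j' ^ 2) else h j * h j := by
    intro i i' j
    have key : ∀ j₁ j₂ : Fin d,
        ∫ ω, h j₁ * h j₂ * ((U ω i j * U ω i j₁) * (U ω i' j * U ω i' j₂)) ∂P
          = h j₁ * h j₂ * (if i = i' then (if j₁ = j₂ then (1:ℝ) else 0)
              else (if j = j₁ then (1:ℝ) else 0) * (if j = j₂ then (1:ℝ) else 0)) := by
      intro j₁ j₂
      rw [integral_const_mul]
      by_cases hii : i = i'
      · subst hii; rw [if_pos rfl, E4diag]
      · rw [if_neg hii, E4 i i' j j₁ j₂ hii]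
    rw [integral_finset_sum _ (fun j₁ _ => integrable_finset_sum _
      (fun j₂ _ => (I_AAAA i i' j j₁ j₂).const_mul _))]
    have step : ∀ j₁ : Fin d,
        ∫ ω, ∑ j₂, h j₁ * h j₂ * ((U ω i j * U ω i j₁) * (U ω i' j * U ω i' j₂)) ∂P
          = ∑ j₂, ∫ ω, h j₁ * h j₂ * ((U ω i j * U ω i j₁) * (U ω i' j * U ω i' j₂)) ∂P :=
      fun j₁ => integral_finset_sum _ (fun j₂ _ => (I_AAAA i i' j j₁ j₂).const_mul _)
    calc ∑ j₁, ∫ ω, ∑ j₂, h j₁ * h j₂ * ((U ω i j * U ω i j₁) * (U ω i' j * U ω i' j₂)) ∂P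
        = ∑ j₁, ∑ j₂, h j₁ * h j₂ * (if i = i' then (if j₁ = j₂ then (1:ℝ) else 0)
            else (if j = j₁ then (1:ℝ) else 0) * (if j = j₂ then (1:ℝ) else 0)) := by
          refine Finset.sum_congr rfl fun j₁ _ => ?_
          rw [step j₁]
          exact Finset.sum_congr rfl fun j₂ _ => key j₁ j₂
      _ = _ := by
          by_cases hii : i = i'
          · rw [if_pos hii]
            simp only [if_pos hii, mul_ite, mul_one, mul_zero]
            simp [Finset.sum_ite_eq, pow_two]
          · rw [if_neg hii]
            simp only [if_neg hii, mul_ite, ite_mul, mul_one, mul_zero, one_mul, zero_mul]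
            simp [Finset.sum_ite_eq]
  have E_T2 : ∀ (i i' : Fin r) (j : Fin d),
      ∫ ω, ∑ j₁, h j₁ * ((U ω i j * U ω i j₁) * (U ω i' j * w ω i')) ∂P = 0 := by
    intro i i' j
    rw [integral_finset_sum _ (fun j₁ _ => (I_AAAW i i' j j₁ i').const_mul _)]
    refine Finset.sum_eq_zero fun j₁ _ => ?_
    rw [integral_const_mul, E_3AW, mul_zero]
  have E_T3 : ∀ (i i' : Fin r) (j : Fin d),
      ∫ ω, ∑ j₂, h j₂ * ((U ω i' j * U ω i' j₂) * (U ω i j * w ω i)) ∂P = 0 := by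
    intro i i' j
    rw [integral_finset_sum _ (fun j₂ _ => (I_AAAW i' i j j₂ i).const_mul _)]
    refine Finset.sum_eq_zero fun j₂ _ => ?_
    rw [integral_const_mul, E_3AW, mul_zero]
  have heqFF : ∀ (j : Fin d) (i i' : Fin r),
      (fun ω => (U ω i j * Y i ω) * (U ω i' j * Y i' ω))
        = fun ω =>
          (1/(r:ℝ))^2 * (∑ j₁, ∑ j₂, h j₁ * h j₂ * ((U ω i j * U ω i j₁) * (U ω i' j * U ω i' j₂)))
          + ((1/(r:ℝ)) * κ) * (∑ j₁, h j₁ * ((U ω i j * U ω i j₁) * (U ω i' j * w ω i')))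
          + ((1/(r:ℝ)) * κ) * (∑ j₂, h j₂ * ((U ω i' j * U ω i' j₂) * (U ω i j * w ω i)))
          + κ^2 * ((U ω i j * U ω i' j) * (w ω i * w ω i')) := by
    intro j i i'
    funext ω
    exact monomial_expand (1/(r:ℝ)) κ h (U ω i j) (U ω i' j)
      (fun j' => U ω i j') (fun j' => U ω i' j') (w ω i) (w ω i')
  have int1 : ∀ (j : Fin d) (i i' : Fin r), Integrable (fun ω =>
      (1/(r:ℝ))^2 * (∑ j₁, ∑ j₂, h j₁ * h j₂
        * ((U ω i j * U ω i j₁) * (U ω i' j * U ω i' j₂)))) P :=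
    fun j i i' => (integrable_finset_sum _ fun j₁ _ => integrable_finset_sum _
      fun j₂ _ => (I_AAAA i i' j j₁ j₂).const_mul _).const_mul _
  have int2 : ∀ (j : Fin d) (i i' : Fin r), Integrable (fun ω =>
      ((1/(r:ℝ)) * κ) * (∑ j₁, h j₁ * ((U ω i j * U ω i j₁) * (U ω i' j * w ω i')))) P :=
    fun j i i' => (integrable_finset_sum _ fun j₁ _ =>
      (I_AAAW i i' j j₁ i').const_mul _).const_mul _
  have int3 : ∀ (j : Fin d) (i i' : Fin r), Integrable (fun ω =>
      ((1/(r:ℝ)) * κ) * (∑ j₂, h j₂ * ((U ω i' j * U ω i' j₂) * (U ω i j * w ω i)))) P :=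
    fun j i i' => (integrable_finset_sum _ fun j₂ _ =>
      (I_AAAW i' i j j₂ i).const_mul _).const_mul _
  have int4 : ∀ (j : Fin d) (i i' : Fin r), Integrable (fun ω =>
      κ^2 * ((U ω i j * U ω i' j) * (w ω i * w ω i'))) P :=
    fun j i i' => (I_AAWW i i' j i i').const_mul _
  have I_FF : ∀ (j : Fin d) (i i' : Fin r),
      Integrable (fun ω => (U ω i j * Y i ω) * (U ω i' j * Y i' ω)) P := by
    intro j i i'
    rw [heqFF j i i']
    exact (((int1 j i i').add (int2 j i i')).add (int3 j i i')).add (int4 j i i')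
  have hFF : ∀ (j : Fin d) (i i' : Fin r),
      ∫ ω, (U ω i j * Y i ω) * (U ω i' j * Y i' ω) ∂P
        = if i = i' then ((1/(r:ℝ))^2 * (∑ j', h j' ^ 2) + κ^2 * σc^2)
          else (1/(r:ℝ))^2 * (h j * h j) := by
    intro j i i'
    rw [heqFF j i i']
    refine Eq.trans (integral_add (((int1 j i i').add (int2 j i i')).add (int3 j i i'))
      (int4 j i i')) ?_
    refine Eq.trans (congrArg₂ (· + ·)
      (integral_add ((int1 j i i').add (int2 j i i')) (int3 j i i')) rfl) ?_
    refine Eq.trans (congrArg₂ (· + ·) (congrArg₂ (· + ·)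
      (integral_add (int1 j i i') (int2 j i i')) rfl) rfl) ?_
    rw [integral_const_mul, integral_const_mul, integral_const_mul, integral_const_mul,
      E_T1, E_T2, E_T3, E_T4]
    by_cases hii : i = i'
    · rw [if_pos hii, if_pos hii, if_pos hii]; ring
    · rw [if_neg hii, if_neg hii, if_neg hii]; ring
  ---- main computation
  have hptw : (fun ω => ∑ j, ((1/(r:ℝ)) * ((U ω)ᵀ *ᵥ (U ω *ᵥ h)) j
        + κ * ((U ω)ᵀ *ᵥ w ω) j) ^ 2)
      = fun ω => ∑ j, ∑ i, ∑ i', (U ω i j * Y i ω) * (U ω i' j * Y i' ω) := by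
    funext ω
    refine Finset.sum_congr rfl fun j _ => ?_
    rw [vec_expand (1/(r:ℝ)) κ (U ω) (w ω) h j, sq, Finset.sum_mul_sum]
  have hmain : ∫ ω, ∑ j, ((1/(r:ℝ)) * ((U ω)ᵀ *ᵥ (U ω *ᵥ h)) j
        + κ * ((U ω)ᵀ *ᵥ w ω) j) ^ 2 ∂P
      = ∑ j : Fin d, ∑ i : Fin r, ∑ i' : Fin r,
          (if i = i' then ((1/(r:ℝ))^2 * (∑ j', h j' ^ 2) + κ^2 * σc^2)
            else (1/(r:ℝ))^2 * (h j * h j)) := by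
    rw [show (fun ω => ∑ j, ((1/(r:ℝ)) * ((U ω)ᵀ *ᵥ (U ω *ᵥ h)) j
        + κ * ((U ω)ᵀ *ᵥ w ω) j) ^ 2)
      = fun ω => ∑ j, ∑ i, ∑ i', (U ω i j * Y i ω) * (U ω i' j * Y i' ω) from hptw]
    rw [integral_finset_sum _ (fun j _ => integrable_finset_sum _ fun i _ =>
      integrable_finset_sum _ fun i' _ => I_FF j i i')]
    refine Finset.sum_congr rfl fun j _ => ?_
    rw [integral_finset_sum _ (fun i _ => integrable_finset_sum _ fun i' _ => I_FF j i i')]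
    refine Finset.sum_congr rfl fun i _ => ?_
    rw [integral_finset_sum _ (fun i' _ => I_FF j i i')]
    exact Finset.sum_congr rfl fun i' _ => hFF j i i'
  ---- numeric evaluation of the triple sum
  set H : ℝ := ∑ j, h j ^ 2 with hH
  set Dv : ℝ := (1/(r:ℝ))^2 * H + κ^2 * σc^2 with hDv
  have hrpos : (0:ℝ) < r := by exact_mod_cast hr
  have hnpos : (0:ℝ) < n := by exact_mod_cast hn
  have hsq : Real.sqrt (r:ℝ) ^ 2 = r := Real.sq_sqrt hrpos.le
  have hsqrtpos : 0 < Real.sqrt (r:ℝ) := Real.sqrt_pos.mpr hrpos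
  have hκ2 : κ^2 = 1/(((n:ℝ)*c)^2 * r) := by
    rw [hκ, div_pow, one_pow, mul_pow, hsq]
  have htriple : ∑ j : Fin d, ∑ i : Fin r, ∑ i' : Fin r,
      (if i = i' then Dv else (1/(r:ℝ))^2 * (h j * h j))
      = (1 + ((d:ℝ) - 1)/(r:ℝ)) * H + (d:ℝ) * σc^2 / ((n:ℝ)*c)^2 := by
    have inner : ∀ (j : Fin d) (i : Fin r),
        ∑ i' : Fin r, (if i = i' then Dv else (1/(r:ℝ))^2 * (h j * h j))
          = (r:ℝ) * ((1/(r:ℝ))^2 * (h j * h j)) + (Dv - (1/(r:ℝ))^2 * (h j * h j)) := by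
      intro j i
      have : ∀ i' : Fin r, (if i = i' then Dv else (1/(r:ℝ))^2 * (h j * h j))
          = (1/(r:ℝ))^2 * (h j * h j)
            + (if i = i' then Dv - (1/(r:ℝ))^2 * (h j * h j) else 0) := by
        intro i'; split_ifs <;> ring
      rw [Finset.sum_congr rfl fun i' _ => this i', Finset.sum_add_distrib,
        Finset.sum_const, Finset.sum_ite_eq, if_pos (Finset.mem_univ i),
        Finset.card_univ, Fintype.card_fin, nsmul_eq_mul]
    have hcols : ∀ j : Fin d, ∑ i : Fin r, ∑ i' : Fin r,
        (if i = i' then Dv else (1/(r:ℝ))^2 * (h j * h j))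
          = (r:ℝ) * ((r:ℝ) * ((1/(r:ℝ))^2 * (h j * h j))
            + (Dv - (1/(r:ℝ))^2 * (h j * h j))) := by
      intro j
      rw [Finset.sum_congr rfl fun i _ => inner j i, Finset.sum_const,
        Finset.card_univ, Fintype.card_fin, nsmul_eq_mul]
    rw [Finset.sum_congr rfl fun j _ => hcols j]
    have expand : ∀ j : Fin d, (r:ℝ) * ((r:ℝ) * ((1/(r:ℝ))^2 * (h j * h j))
        + (Dv - (1/(r:ℝ))^2 * (h j * h j)))
        = ((r:ℝ)^2 - r) * (1/(r:ℝ))^2 * h j ^ 2 + (r:ℝ) * Dv := by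
      intro j; ring
    rw [Finset.sum_congr rfl fun j _ => expand j, Finset.sum_add_distrib,
      Finset.sum_const, Finset.card_univ, Fintype.card_fin, nsmul_eq_mul,
      ← Finset.mul_sum, ← hH, hDv, hκ2]
    have hrne : (r:ℝ) ≠ 0 := hrpos.ne'
    have hnne : (n:ℝ) ≠ 0 := hnpos.ne'
    have hcne : c ≠ 0 := hc.ne'
    field_simp
    ring
  constructor
  · rw [hmain]
    exact htriple
  · intro hL
    rw [hmain, htriple]
    have hH0 : 0 ≤ H := Finset.sum_nonneg fun j _ => sq_nonneg _
    have hHle : H ≤ L ^ 2 := by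
      have := Real.sq_sqrt hH0
      nlinarith [Real.sqrt_nonneg H]
    have hfac : 0 ≤ 1 + ((d:ℝ) - 1)/(r:ℝ) := by
      have hd1 : (1:ℝ) ≤ (d:ℝ) := by exact_mod_cast hd
      have : 0 ≤ ((d:ℝ) - 1)/(r:ℝ) := div_nonneg (by linarith) hrpos.le
      linarith
    nlinarith [hfac, hHle]
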